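/- Let γ = (X, Y, Z) be a triangular polynomial automorphism of K[x,y,z] (so X ∈ K*x + K[y,z], Y ∈ K*y + K[z], Z ∈ K*z + K) with ldeg₂(X) = (0, b, c) where b ≥ 1 and c ≥ 0 (ldeg₂ being the leading exponent in the lex order with y > z > x), deg_{(3,3,1)}(X) = 3b + c and deg_{(3,3,1)}(Y) = 3. Then for every P ∈ P_{m,n}^* (m ≥ 1, n ≥ 0), the polynomial (P)πγ lies in Q_{m',n'}^* with m' = 4bm and n' = 4cm + n; that is, its support lies in {(i,j,k) : i+j ≤ m', 3i+3j+k ≤ 3m'+n'} and its ldeg₂ equals (0, m', n'). -/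

import Mathlib

open MvPolynomial

/-- Lexicographic key: `toLex (p, toLex (q, r))`. -/
def lkey (p q r : ℕ) : ℕ ×ₗ (ℕ ×ₗ ℕ) := toLex (p, toLex (q, r))

variable {K : Type*} [Field K]

/-- The `w`-weighted degree of a polynomial in `K[x,y,z]`. -/
noncomputable def degW (w1 w2 w3 : ℕ) (P : MvPolynomial (Fin 3) K) : ℕ :=
  P.support.sup (fun d => w1 * d 0 + w2 * d 1 + w3 * d 2)

/-- `ldeg₂ P = (i,j,k)`: leading exponent in the lex order with `y > z > x`. -/
def HasLdeg2 (P : MvPolynomial (Fin 3) K) (i j k : ℕ) : Prop :=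
  (∃ d ∈ P.support, d 0 = i ∧ d 1 = j ∧ d 2 = k) ∧
  ∀ d ∈ P.support, lkey (d 1) (d 2) (d 0) ≤ lkey j k i

/-- `ldeg₃ P = (i,j,k)`: leading exponent in the lex order with `z > x > y`. -/
def HasLdeg3 (P : MvPolynomial (Fin 3) K) (i j k : ℕ) : Prop :=
  (∃ d ∈ P.support, d 0 = i ∧ d 1 = j ∧ d 2 = k) ∧
  ∀ d ∈ P.support, lkey (d 2) (d 0) (d 1) ≤ lkey k i j

/-! ### Auxiliary lemmas -/

theorem lkey_le_iff {p q r p' q' r' : ℕ} :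
    lkey p q r ≤ lkey p' q' r' ↔ p < p' ∨ (p = p' ∧ (q < q' ∨ (q = q' ∧ r ≤ r'))) := by
  simp [lkey, Prod.Lex.le_iff]

theorem lkey_lt_iff {p q r p' q' r' : ℕ} :
    lkey p q r < lkey p' q' r' ↔ p < p' ∨ (p = p' ∧ (q < q' ∨ (q = q' ∧ r < r'))) := by
  simp [lkey, Prod.Lex.lt_iff]

/-- Exponent constructor for `Fin 3 →₀ ℕ`. -/
noncomputable def e3 (i j k : ℕ) : Fin 3 →₀ ℕ := Finsupp.equivFunOnFinite.symm ![i, j, k]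

@[simp] lemma e3_0 (i j k : ℕ) : e3 i j k 0 = i := rfl
@[simp] lemma e3_1 (i j k : ℕ) : e3 i j k 1 = j := rfl
@[simp] lemma e3_2 (i j k : ℕ) : e3 i j k 2 = k := rfl

lemma fin3_ext {d e : Fin 3 →₀ ℕ} (h0 : d 0 = e 0) (h1 : d 1 = e 1) (h2 : d 2 = e 2) : d = e := by
  ext i; fin_cases i <;> assumption

lemma e3_add (i j k i' j' k' : ℕ) : e3 i j k + e3 i' j' k' = e3 (i+i') (j+j') (k+k') := by
  apply fin3_ext <;> simp

/-- all exponents of `f` have lex₂-key at most `lkey p q r` -/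
def KB (f : MvPolynomial (Fin 3) K) (p q r : ℕ) : Prop :=
  ∀ d ∈ f.support, lkey (d 1) (d 2) (d 0) ≤ lkey p q r

/-- weighted degree bound -/
def WB (f : MvPolynomial (Fin 3) K) (w1 w2 w3 D : ℕ) : Prop :=
  ∀ d ∈ f.support, w1 * d 0 + w2 * d 1 + w3 * d 2 ≤ D

lemma KB_mul {f g : MvPolynomial (Fin 3) K} {p q r p' q' r' : ℕ}
    (hf : KB f p q r) (hg : KB g p' q' r') : KB (f * g) (p + p') (q + q') (r + r') := by
  intro d hd
  obtain ⟨u, hu, v, hv, huv⟩ := Finset.mem_add.mp (support_mul f g hd)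
  have h1 := lkey_le_iff.mp (hf u hu)
  have h2 := lkey_le_iff.mp (hg v hv)
  subst huv
  simp only [Finsupp.add_apply, lkey_le_iff]
  omega

lemma KB_C (a : K) (p q r : ℕ) : KB (C a) p q r := by
  intro d hd
  have : d = 0 := by
    by_contra h
    simp [mem_support_iff, coeff_C, Ne.symm h] at hd
  subst this
  simp only [Finsupp.coe_zero, Pi.zero_apply, lkey_le_iff]
  omega

lemma KB_one (p q r : ℕ) : KB (1 : MvPolynomial (Fin 3) K) p q r := by
  simpa using KB_C (1 : K) p q r

lemma KB_pow {f : MvPolynomial (Fin 3) K} {p q r : ℕ} (hf : KB f p q r) (k : ℕ) :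
    KB (f ^ k) (k * p) (k * q) (k * r) := by
  induction k with
  | zero => simpa using KB_one 0 0 0
  | succ k ih =>
      rw [pow_succ, show (k+1)*p = k*p+p from by ring, show (k+1)*q = k*q+q from by ring,
        show (k+1)*r = k*r+r from by ring]
      exact KB_mul ih hf

lemma WB_mul {f g : MvPolynomial (Fin 3) K} {w1 w2 w3 D D' : ℕ}
    (hf : WB f w1 w2 w3 D) (hg : WB g w1 w2 w3 D') : WB (f * g) w1 w2 w3 (D + D') := by
  intro d hd
  obtain ⟨u, hu, v, hv, huv⟩ := Finset.mem_add.mp (support_mul f g hd)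
  have h1 := hf u hu
  have h2 := hg v hv
  subst huv
  simp only [Finsupp.add_apply]
  have : w1 * (u 0 + v 0) + w2 * (u 1 + v 1) + w3 * (u 2 + v 2)
      = (w1 * u 0 + w2 * u 1 + w3 * u 2) + (w1 * v 0 + w2 * v 1 + w3 * v 2) := by ring
  omega

lemma WB_C (a : K) (w1 w2 w3 D : ℕ) : WB (C a) w1 w2 w3 D := by
  intro d hd
  have : d = 0 := by
    by_contra h
    simp [mem_support_iff, coeff_C, Ne.symm h] at hd
  simp [this]

lemma WB_pow {f : MvPolynomial (Fin 3) K} {w1 w2 w3 D : ℕ} (hf : WB f w1 w2 w3 D) (k : ℕ) :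
    WB (f ^ k) w1 w2 w3 (k * D) := by
  induction k with
  | zero => simpa using WB_C (1 : K) w1 w2 w3 0
  | succ k ih =>
      rw [pow_succ, show (k+1)*D = k*D+D from by ring]
      exact WB_mul ih hf

lemma KB_coeff_mul {f g : MvPolynomial (Fin 3) K} {p q r p' q' r' : ℕ}
    (hf : KB f p q r) (hg : KB g p' q' r') :
    coeff (e3 (r + r') (p + p') (q + q')) (f * g)
      = coeff (e3 r p q) f * coeff (e3 r' p' q') g := by
  rw [coeff_mul]
  apply Finset.sum_eq_single_of_mem (e3 r p q, e3 r' p' q')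
  · rw [Finset.HasAntidiagonal.mem_antidiagonal]; exact e3_add r p q r' p' q'
  · rintro ⟨u, v⟩ hmem hne
    rw [Finset.HasAntidiagonal.mem_antidiagonal] at hmem
    by_cases hu : coeff u f = 0
    · simp [hu]
    by_cases hv : coeff v g = 0
    · simp [hv]
    exfalso
    have h1 := lkey_le_iff.mp (hf u (mem_support_iff.mpr hu))
    have h2 := lkey_le_iff.mp (hg v (mem_support_iff.mpr hv))
    have e0 : u 0 + v 0 = r + r' := by
      have := congrArg (fun w => w 0) hmem; simpa using this
    have e1 : u 1 + v 1 = p + p' := by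
      have := congrArg (fun w => w 1) hmem; simpa using this
    have e2 : u 2 + v 2 = q + q' := by
      have := congrArg (fun w => w 2) hmem; simpa using this
    apply hne
    have hu0 : u 0 = r := by omega
    have hu1 : u 1 = p := by omega
    have hu2 : u 2 = q := by omega
    have : u = e3 r p q := fin3_ext (by simpa using hu0) (by simpa using hu1) (by simpa using hu2)
    have : v = e3 r' p' q' := fin3_ext (by simp; omega) (by simp; omega) (by simp; omega)
    exact Prod.ext ‹u = e3 r p q› this

lemma KB_coeff_pow {f : MvPolynomial (Fin 3) K} {p q r : ℕ} (hf : KB f p q r) (k : ℕ) :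
    coeff (e3 (k * r) (k * p) (k * q)) (f ^ k) = (coeff (e3 r p q) f) ^ k := by
  induction k with
  | zero => simp [e3]; rw [show (Finsupp.equivFunOnFinite.symm ![0,0,0] : Fin 3 →₀ ℕ) = 0 from
      fin3_ext (by simp) (by simp) (by simp)]; simp
  | succ k ih =>
      have h := KB_coeff_mul (KB_pow hf k) hf
      rw [pow_succ, pow_succ, ← ih, ← h, show (k+1)*p = k*p+p from by ring,
        show (k+1)*q = k*q+q from by ring, show (k+1)*r = k*r+r from by ring]

lemma degW_bound {w1 w2 w3 D : ℕ} {f : MvPolynomial (Fin 3) K} (h : degW w1 w2 w3 f = D) :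
    ∀ e ∈ f.support, w1 * e 0 + w2 * e 1 + w3 * e 2 ≤ D :=
  Finset.sup_le_iff.mp (le_of_eq h)

/-- The triangular-case lemma: if `γ = (Xp, Yp, Zp)` is a triangular automorphism
with `ldeg₂(Xp) = (0,b,c)`, `b ≥ 1`, `deg_{(3,3,1)}(Xp) = 3b+c` and
`deg_{(3,3,1)}(Yp) = 3`, then for every `P ∈ P*_{m,n}` the polynomial `(P)πγ`
lies in `Q*_{m',n'}` with `m' = 4bm` and `n' = 4cm + n`. -/
theorem triangular_case (m n b c : ℕ) (hm : 1 ≤ m) (hb : 1 ≤ b)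
    (Xp Yp Zp : MvPolynomial (Fin 3) K)
    -- γ = (Xp, Yp, Zp) is triangular
    (htriX : ∃ (a : Kˣ) (p : MvPolynomial (Fin 3) K),
      Xp = C (a : K) * X 0 + p ∧ ∀ d ∈ p.support, d 0 = 0)
    (htriY : ∃ (a : Kˣ) (q : MvPolynomial (Fin 3) K),
      Yp = C (a : K) * X 1 + q ∧ ∀ d ∈ q.support, d 0 = 0 ∧ d 1 = 0)
    (htriZ : ∃ (a : Kˣ) (r : K), Zp = C (a : K) * X 2 + C r)
    -- degree hypotheses on γ
    (hXl2 : HasLdeg2 Xp 0 b c)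
    (hXdeg : degW 3 3 1 Xp = 3 * b + c)
    (hYdeg : degW 3 3 1 Yp = 3)
    -- P ∈ P*_{m,n}
    (P : MvPolynomial (Fin 3) K)
    (hPsupp : ∀ d ∈ P.support,
      4 * d 0 + d 1 ≤ 4 * m ∧ 4 * d 0 + d 2 ≤ 4 * m + n ∧
      8 * d 0 + 2 * d 1 + d 2 ≤ 8 * m + n)
    (hPl2 : HasLdeg2 P 0 (4 * m) n)
    (hPl3 : HasLdeg3 P 0 (2 * m) (4 * m + n)) :
    -- conclusion : (P)πγ ∈ Q*_{4bm, 4cm+n}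
    let Q : MvPolynomial (Fin 3) K := aeval ![Yp, Xp, Zp] P
    (∀ d ∈ Q.support,
        d 0 + d 1 ≤ 4 * b * m ∧
        3 * d 0 + 3 * d 1 + d 2 ≤ 3 * (4 * b * m) + (4 * c * m + n)) ∧
    HasLdeg2 Q 0 (4 * b * m) (4 * c * m + n) := by
  intro Q
  -- rewrite Q as a sum over the support of P
  have hQrw : Q = ∑ d ∈ P.support, C (P.coeff d) * (Yp ^ d 0 * Xp ^ d 1 * Zp ^ d 2) := by
    show aeval ![Yp, Xp, Zp] P = _
    rw [aeval_def, eval₂_eq']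
    refine Finset.sum_congr rfl fun d _ => ?_
    rw [Fin.prod_univ_three]
    simp [algebraMap_eq, mul_assoc]
  -- facts about Zp
  obtain ⟨aZ, rZ, hZ⟩ := htriZ
  have hZc : ∀ e : Fin 3 →₀ ℕ, coeff e Zp
      = (aZ:K) * (if Finsupp.single 2 1 = e then 1 else 0) + (if 0 = e then rZ else 0) := by
    intro e; rw [hZ]; simp [coeff_add, coeff_C_mul, coeff_X', coeff_C]
  have hZsup : ∀ e ∈ Zp.support, e 0 = 0 ∧ e 1 = 0 ∧ e 2 ≤ 1 := by
    intro e he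
    rw [mem_support_iff, hZc] at he
    by_cases h1 : Finsupp.single 2 1 = e
    · rw [← h1]; refine ⟨?_, ?_, ?_⟩ <;> simp [Finsupp.single_apply]
    · by_cases h2 : (0 : Fin 3 →₀ ℕ) = e
      · rw [← h2]; simp
      · simp [h1, h2] at he
  have hZcoeff : coeff (e3 0 0 1) Zp = aZ := by
    have h1 : Finsupp.single 2 1 = e3 0 0 1 := fin3_ext (by simp [Finsupp.single_apply])
      (by simp [Finsupp.single_apply]) (by simp [Finsupp.single_apply])
    have h2 : (0 : Fin 3 →₀ ℕ) ≠ e3 0 0 1 := by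
      intro h; have := congrArg (fun w => w 2) h; simp at this
    rw [hZc, if_pos h1, if_neg h2]; simp
  have hZk : KB Zp 0 1 0 := by
    intro e he; obtain ⟨h0, h1, h2⟩ := hZsup e he; rw [lkey_le_iff]; omega
  have hZw1 : WB Zp 1 1 0 0 := by
    intro e he; obtain ⟨h0, h1, h2⟩ := hZsup e he; simp [h0, h1]
  have hZw3 : WB Zp 3 3 1 1 := by
    intro e he; obtain ⟨h0, h1, h2⟩ := hZsup e he; simp [h0, h1]; omega
  -- facts about Yp
  have hYsup := degW_bound hYdeg
  have hYk : KB Yp 1 0 0 := by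
    intro e he; have := hYsup e he; rw [lkey_le_iff]; omega
  have hYw1 : WB Yp 1 1 0 1 := by intro e he; have := hYsup e he; omega
  have hYw3 : WB Yp 3 3 1 3 := by intro e he; have := hYsup e he; omega
  -- facts about Xp
  have hXk : KB Xp b c 0 := hXl2.2
  have hXw3 : WB Xp 3 3 1 (3 * b + c) := by
    intro e he; have := degW_bound hXdeg e he; omega
  have hXw1 : WB Xp 1 1 0 b := by
    obtain ⟨aX, pX, hX, hpX⟩ := htriX
    intro e he
    have hk := lkey_le_iff.mp (hXk e he)
    by_cases h0 : e 0 = 0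
    · simp only [h0]; omega
    · have hpc : coeff e pX = 0 := by
        by_contra hc
        exact h0 (hpX e (mem_support_iff.mpr hc))
      rw [mem_support_iff, hX, coeff_add, coeff_C_mul, coeff_X', hpc] at he
      by_cases h1 : Finsupp.single 0 1 = e
      · rw [← h1]; simp [Finsupp.single_apply]; omega
      · simp [h1] at he
  have hXcoeff : coeff (e3 0 b c) Xp ≠ 0 := by
    obtain ⟨d, hd, h0, h1, h2⟩ := hXl2.1
    have : d = e3 0 b c := fin3_ext (by simp [h0]) (by simp [h1]) (by simp [h2])
    rw [← this]; exact mem_support_iff.mp hd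
  -- the leading coefficient of P
  have hPcoeff : coeff (e3 0 (4 * m) n) P ≠ 0 := by
    obtain ⟨d, hd, h0, h1, h2⟩ := hPl2.1
    have : d = e3 0 (4 * m) n := fin3_ext (by simp [h0]) (by simp [h1]) (by simp [h2])
    rw [← this]; exact mem_support_iff.mp hd
  -- key bound for the terms of Q
  have hTk : ∀ d : Fin 3 →₀ ℕ, KB (C (P.coeff d) * (Yp ^ d 0 * Xp ^ d 1 * Zp ^ d 2))
      (0 + (d 0 * 1 + d 1 * b + d 2 * 0)) (0 + (d 0 * 0 + d 1 * c + d 2 * 1))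
      (0 + (d 0 * 0 + d 1 * 0 + d 2 * 0)) :=
    fun d => KB_mul (KB_C _ 0 0 0)
      (KB_mul (KB_mul (KB_pow hYk (d 0)) (KB_pow hXk (d 1))) (KB_pow hZk (d 2)))
  -- the key of each term is dominated by the leading key
  have hkb : ∀ d ∈ P.support, (d 0 = 0 ∧ d 1 = 4 * m ∧ d 2 = n) ∨
      lkey (0 + (d 0 * 1 + d 1 * b + d 2 * 0)) (0 + (d 0 * 0 + d 1 * c + d 2 * 1))
        (0 + (d 0 * 0 + d 1 * 0 + d 2 * 0)) < lkey (4 * b * m) (4 * c * m + n) 0 := by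
    intro d hd
    obtain ⟨h1, h2, h3⟩ := hPsupp d hd
    have hl2 := lkey_le_iff.mp (hPl2.2 d hd)
    by_cases hd0 : d 0 = 0
    · by_cases hd1 : d 1 = 4 * m
      · by_cases hd2 : d 2 = n
        · exact Or.inl ⟨hd0, hd1, hd2⟩
        · right
          rw [lkey_lt_iff]
          right
          constructor
          · rw [hd0, hd1]; ring
          · left
            rw [hd0, hd1]
            have : d 2 < n := by omega
            nlinarith
      · right
        rw [lkey_lt_iff]
        left
        rw [hd0]
        have hlt : d 1 < 4 * m := by omega
        nlinarith
    · right
      rw [lkey_lt_iff]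
      left
      have hd0' : 1 ≤ d 0 := by omega
      nlinarith
  refine ⟨?_, ?_, ?_⟩
  · -- Part 1 : support bounds
    intro e he
    rw [hQrw] at he
    obtain ⟨d, hd, heT⟩ := Finset.mem_biUnion.mp (support_sum he)
    obtain ⟨h1, h2, h3⟩ := hPsupp d hd
    have hw1 := WB_mul (WB_C (P.coeff d) 1 1 0 0)
      (WB_mul (WB_mul (WB_pow hYw1 (d 0)) (WB_pow hXw1 (d 1))) (WB_pow hZw1 (d 2))) e heT
    have hw3 := WB_mul (WB_C (P.coeff d) 3 3 1 0)
      (WB_mul (WB_mul (WB_pow hYw3 (d 0)) (WB_pow hXw3 (d 1))) (WB_pow hZw3 (d 2))) e heT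
    constructor
    · nlinarith
    · nlinarith
  · -- existence of the leading monomial of Q
    have hcoeffQ : coeff (e3 0 (4 * b * m) (4 * c * m + n)) Q
        = coeff (e3 0 (4 * m) n) P * ((coeff (e3 0 b c) Xp) ^ (4 * m) * (aZ : K) ^ n) := by
      rw [hQrw, coeff_sum]
      rw [Finset.sum_eq_single_of_mem (e3 0 (4 * m) n) (mem_support_iff.mpr hPcoeff)]
      · simp only [e3_0, e3_1, e3_2, pow_zero, one_mul, coeff_C_mul]
        congr 1
        have h := KB_coeff_mul (KB_pow hXk (4 * m)) (KB_pow hZk n)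
        rw [KB_coeff_pow hXk (4 * m), KB_coeff_pow hZk n, hZcoeff] at h
        rw [show 4 * m * 0 + n * 0 = 0 from by ring, show 4 * m * b + n * 0 = 4 * b * m from by
          ring, show 4 * m * c + n * 1 = 4 * c * m + n from by ring] at h
        rw [h]
      · intro d hd hne
        by_contra hc
        have hmem : e3 0 (4 * b * m) (4 * c * m + n)
            ∈ (C (P.coeff d) * (Yp ^ d 0 * Xp ^ d 1 * Zp ^ d 2)).support :=
          mem_support_iff.mpr hc
        have hk := hTk d _ hmem
        simp only [e3_0, e3_1, e3_2] at hk
        rcases hkb d hd with ⟨h0, h1, h2⟩ | hlt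
        · exact hne (fin3_ext (by simp [h0]) (by simp [h1]) (by simp [h2]))
        · exact absurd (lt_of_le_of_lt hk hlt) (lt_irrefl _)
    have hQne : coeff (e3 0 (4 * b * m) (4 * c * m + n)) Q ≠ 0 := by
      rw [hcoeffQ]
      exact mul_ne_zero hPcoeff
        (mul_ne_zero (pow_ne_zero _ hXcoeff) (pow_ne_zero _ (Units.ne_zero aZ)))
    exact ⟨e3 0 (4 * b * m) (4 * c * m + n), mem_support_iff.mpr hQne, rfl, rfl, rfl⟩
  · -- Part 2 : key bound for Q
    intro e he
    rw [hQrw] at he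
    obtain ⟨d, hd, heT⟩ := Finset.mem_biUnion.mp (support_sum he)
    have hk := hTk d e heT
    rcases hkb d hd with ⟨h0, h1, h2⟩ | hlt
    · rw [h0, h1, h2] at hk
      rw [show 0 + (0 * 1 + 4 * m * b + n * 0) = 4 * b * m from by ring,
        show 0 + (0 * 0 + 4 * m * c + n * 1) = 4 * c * m + n from by ring,
        show 0 + (0 * 0 + 4 * m * 0 + n * 0) = 0 from by ring] at hk
      exact hk
    · exact le_trans hk (le_of_lt hlt)
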